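/- Let C₀,...,C_{m-1} ⊆ H be nonempty closed convex sets with nonempty interior of their intersection, and let 2 ≤ r ≤ m-1. Then the fixed point set of the r-sets-Douglas-Rachford operator T_{C₀,...,C_{r-1}} = (1/2)(Id + R_{C_{r-1}}...R_{C₀}) equals ∩_{i=0}^{r-1} C_i. -/

import Mathlib

open RealInnerProductSpace

private def recSeq {H : Type*} (f : H → ℕ → H) (x : H) : ℕ → H
  | 0 => x
  | n + 1 => f (recSeq f x n) n

private lemma foldl_eq_recSeq {H : Type*} (f : H → ℕ → H) (x : H) (n : ℕ) :
    Fin.foldl n (fun y i => f y i.val) x = recSeq f x n := by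
  induction n with
  | zero => rw [Fin.foldl_zero]; rfl
  | succ n ih =>
    rw [Fin.foldl_succ_last]
    simp only [Fin.val_last, Fin.coe_castSucc]
    rw [ih]
    rfl

private lemma proj_char {H : Type*} [NormedAddCommGroup H] [InnerProductSpace ℝ H]
    {C : Set H} (hcv : Convex ℝ C) {p x : H} (hp : p ∈ C)
    (hmin : ∀ y ∈ C, ‖x - p‖ ≤ ‖x - y‖) :
    ∀ y ∈ C, ⟪x - p, y - p⟫ ≤ 0 := by
  haveI : Nonempty C := ⟨⟨p, hp⟩⟩
  have h : ‖x - p‖ = ⨅ w : C, ‖x - w‖ := by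
    apply le_antisymm
    · exact le_ciInf fun w => hmin w w.2
    · have hbd : BddBelow (Set.range fun w : C => ‖x - w‖) := by
        refine ⟨0, ?_⟩
        rintro a ⟨w, rfl⟩
        exact norm_nonneg _
      exact ciInf_le hbd (⟨p, hp⟩ : C)
  exact (norm_eq_iInf_iff_real_inner_le_zero hcv hp).mp h

private lemma refl_norm_sq {H : Type*} [NormedAddCommGroup H] [InnerProductSpace ℝ H]
    (y p z : H) :
    ‖(2 : ℝ) • p - y - z‖ ^ 2 = ‖y - z‖ ^ 2 - 4 * ⟪y - p, p - z⟫ := by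
  have h1 : (2 : ℝ) • p - y - z = (p - z) - (y - p) := by
    rw [two_smul]; abel
  have h2 : y - z = (y - p) + (p - z) := by abel
  rw [h1, h2, norm_sub_sq_real, norm_add_sq_real, real_inner_comm (p - z) (y - p)]
  ring

/-- Let `C₀, …, C_{m-1}` be nonempty closed convex sets whose intersection has nonempty
interior, and `2 ≤ r ≤ m - 1`. Then the fixed point set of the `r`-sets-Douglas–Rachford
operator `T = (1/2)(Id + R_{C_{r-1}} ⋯ R_{C₀})` equals `⋂_{i=0}^{r-1} C_i`. -/
theorem fixedPoints_rSetsDR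
    {H : Type*} [NormedAddCommGroup H] [InnerProductSpace ℝ H] [CompleteSpace H]
    (m r : ℕ) (hr : 2 ≤ r) (hrm : r ≤ m - 1)
    (C : ℕ → Set H)
    (hne : ∀ i < m, (C i).Nonempty) (hcl : ∀ i < m, IsClosed (C i))
    (hcv : ∀ i < m, Convex ℝ (C i))
    (hint : (interior (⋂ i ∈ Finset.range m, C i)).Nonempty)
    (P : ℕ → H → H)
    (hP : ∀ i < m, ∀ x : H, P i x ∈ C i ∧ ∀ y ∈ C i, ‖x - P i x‖ ≤ ‖x - y‖)
    (T : H → H)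
    (hT : ∀ x : H,
      T x = (1 / 2 : ℝ) • (x + Fin.foldl r (fun y (i : Fin r) => (2 : ℝ) • P i.val y - y) x)) :
    Function.fixedPoints T = ⋂ i ∈ Finset.range r, C i := by
  have hrm' : ∀ i < r, i < m := by intro i hi; omega
  set f : H → ℕ → H := fun y k => (2 : ℝ) • P k y - y with hf
  -- interior point
  obtain ⟨z₀, hz₀⟩ := hint
  obtain ⟨ε, hε, hball⟩ := Metric.mem_nhds_iff.mp (mem_interior_iff_mem_nhds.mp hz₀)
  have hballC : ∀ z ∈ Metric.ball z₀ ε, ∀ i < m, z ∈ C i := by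
    intro z hz i hi
    have := hball hz
    rw [Set.mem_iInter₂] at this
    exact this i (Finset.mem_range.mpr hi)
  ext x
  simp only [Function.mem_fixedPoints, Function.IsFixedPt, Set.mem_iInter,
    Finset.mem_range]
  have hfold : Fin.foldl r (fun y (i : Fin r) => (2 : ℝ) • P i.val y - y) x
      = recSeq f x r := foldl_eq_recSeq f x r
  set g : ℕ → H := recSeq f x with hg
  have hgsucc : ∀ k, g (k + 1) = (2 : ℝ) • P k (g k) - g k := fun k => rfl
  have hg0 : g 0 = x := rfl
  constructor
  · -- fixed point → in intersection
    intro hfix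
    have hTx := hT x
    rw [hfix, hfold] at hTx
    have hgr : g r = x := by
      have h2 : (2 : ℝ) • x = x + g r := by
        have := congrArg (fun y => (2 : ℝ) • y) hTx
        simp only [smul_smul] at this
        norm_num at this
        exact this
      rw [two_smul] at h2
      exact (add_right_injective x h2).symm
    -- each step is fixed
    have key : ∀ k < r, P k (g k) = g k ∧ g (k + 1) = g k := by
      -- telescoping sum
      set t : ℕ → ℝ := fun k => ⟪g k - P k (g k), P k (g k) - z₀⟫ with ht
      have hstep : ∀ z : H, ∀ k, ‖g (k + 1) - z‖ ^ 2
          = ‖g k - z‖ ^ 2 - 4 * ⟪g k - P k (g k), P k (g k) - z⟫ := by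
        intro z k
        rw [hgsucc k]
        exact refl_norm_sq (g k) (P k (g k)) z
      have hnonneg : ∀ z ∈ Metric.ball z₀ ε, ∀ k < r,
          0 ≤ ⟪g k - P k (g k), P k (g k) - z⟫ := by
        intro z hz k hk
        have hkm := hrm' k hk
        have hchar := proj_char (hcv k hkm) (hP k hkm (g k)).1 (hP k hkm (g k)).2
          z (hballC z hz k hkm)
        have : ⟪g k - P k (g k), P k (g k) - z⟫
            = -⟪g k - P k (g k), z - P k (g k)⟫ := by
          rw [← inner_neg_right]; congr 1; abel
        rw [this]; linarith
      have htel : ∀ z : H, ∀ n ≤ r, ‖g n - z‖ ^ 2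
          = ‖x - z‖ ^ 2 - 4 * ∑ k ∈ Finset.range n, ⟪g k - P k (g k), P k (g k) - z⟫ := by
        intro z n
        induction n with
        | zero => simp [hg0]
        | succ n ih =>
          intro hn
          rw [hstep z n, ih (by omega), Finset.sum_range_succ]
          ring
      have hzero : ∀ z ∈ Metric.ball z₀ ε, ∀ k < r,
          ⟪g k - P k (g k), P k (g k) - z⟫ = 0 := by
        intro z hz k hk
        have hsum : ∑ k ∈ Finset.range r, ⟪g k - P k (g k), P k (g k) - z⟫ = 0 := by
          have := htel z r le_rfl
          rw [hgr] at this
          linarith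
        have := (Finset.sum_eq_zero_iff_of_nonneg
          (fun i hi => hnonneg z hz i (Finset.mem_range.mp hi))).mp hsum
        exact this k (Finset.mem_range.mpr hk)
      intro k hk
      have hz₀ball : z₀ ∈ Metric.ball z₀ ε := Metric.mem_ball_self hε
      have hd : g k - P k (g k) = 0 := by
        by_contra hd
        set d := g k - P k (g k) with hdd
        have hdn : 0 < ‖d‖ := norm_pos_iff.mpr hd
        set c : ℝ := ε / (2 * ‖d‖) with hc
        have hcpos : 0 < c := by positivity
        have hzball : z₀ + c • d ∈ Metric.ball z₀ ε := by
          rw [Metric.mem_ball, dist_eq_norm, add_sub_cancel_left, norm_smul,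
            Real.norm_eq_abs, abs_of_pos hcpos]
          have heq : c * ‖d‖ = ε / 2 := by
            rw [hc]; field_simp
          rw [heq]; linarith
        have h1 := hzero z₀ hz₀ball k hk
        have h2 := hzero (z₀ + c • d) hzball k hk
        have : ⟪d, P k (g k) - (z₀ + c • d)⟫
            = ⟪d, P k (g k) - z₀⟫ - c * ⟪d, d⟫ := by
          have : P k (g k) - (z₀ + c • d) = (P k (g k) - z₀) - c • d := by abel
          rw [this, inner_sub_right, inner_smul_right]
        rw [this, h1] at h2
        have hdd0 : ⟪d, d⟫ = 0 := by
          have : c * ⟪d, d⟫ = 0 := by linarith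
          exact (mul_eq_zero.mp this).resolve_left (ne_of_gt hcpos)
        exact hd (inner_self_eq_zero.mp hdd0)
      have hPk : P k (g k) = g k := by
        have := sub_eq_zero.mp hd
        exact this.symm
      refine ⟨hPk, ?_⟩
      rw [hgsucc k, hPk, two_smul]
      abel
    have hgk : ∀ k ≤ r, g k = x := by
      intro k hk
      induction k with
      | zero => exact hg0
      | succ k ih =>
        rw [(key k (by omega)).2]
        exact ih (by omega)
    intro i hi
    have := (key i hi).1
    rw [hgk i (le_of_lt hi)] at this
    rw [← this]
    exact (hP i (hrm' i hi) x).1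
  · -- in intersection → fixed point
    intro hx
    have hPx : ∀ i < r, P i x = x := by
      intro i hi
      have him := hrm' i hi
      have h1 := (hP i him x).2 x (hx i hi)
      rw [sub_self, norm_zero] at h1
      have : x - P i x = 0 := norm_le_zero_iff.mp h1
      have := sub_eq_zero.mp this
      exact this.symm
    have hgk : ∀ k ≤ r, g k = x := by
      intro k hk
      induction k with
      | zero => exact hg0
      | succ k ih =>
        rw [hgsucc k, ih (by omega), hPx k (by omega), two_smul]
        abel
    rw [hT x, hfold, hgk r le_rfl]
    rw [← two_smul ℝ x, smul_smul]
    norm_num
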